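/- Let X be a real-valued random variable with E X = 0, E X² = σ² < ∞, and E|X|³ < ∞, let T be a real-valued integrable random variable independent of X, let s ∈ ℝ, and let f: ℝ → ℝ be differentiable with f' Lipschitz with constant C (so ‖f''‖_∞ ≤ C). Then |E[σ² f'(s + X + T) − X f(s + X + T)]| ≤ (3/2) C E|X|³. -/

import Mathlib

open MeasureTheory ProbabilityTheory Real

/-- Taylor bound for a function with Lipschitz derivative. -/
lemma taylor_aux (f : ℝ → ℝ) (hf : Differentiable ℝ f) (C : ℝ) (hC0 : 0 ≤ C)
    (hC : ∀ x y : ℝ, |deriv f x - deriv f y| ≤ C * |x - y|) (y x : ℝ) :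
    |f (y + x) - f y - x * deriv f y| ≤ C / 2 * x ^ 2 := by
  have hcont : Continuous (deriv f) := by
    have : LipschitzWith (Real.toNNReal C) (deriv f) := by
      apply LipschitzWith.of_dist_le_mul
      intro a b
      rw [Real.dist_eq, Real.dist_eq, Real.coe_toNNReal _ hC0]
      exact hC a b
    exact this.continuous
  have hftc : (∫ t in y..(y + x), deriv f t) = f (y + x) - f y :=
    intervalIntegral.integral_deriv_eq_sub (fun t _ => hf t) (hcont.intervalIntegrable _ _)
  have hconst : (∫ _t in y..(y + x), deriv f y) = x * deriv f y := by
    rw [intervalIntegral.integral_const, smul_eq_mul, add_sub_cancel_left]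
  have hsub : f (y + x) - f y - x * deriv f y
      = ∫ t in y..(y + x), (deriv f t - deriv f y) := by
    rw [intervalIntegral.integral_sub (hcont.intervalIntegrable _ _)
      intervalIntegrable_const, hftc, hconst]
  rw [hsub, ← Real.norm_eq_abs]
  refine intervalIntegral.norm_integral_le_integral_norm_uIoc.trans ?_
  have hmono : (∫ t in Set.uIoc y (y + x), ‖deriv f t - deriv f y‖)
      ≤ ∫ t in Set.uIoc y (y + x), C * |t - y| := by
    refine setIntegral_mono_on ?_ ?_ measurableSet_uIoc (fun t _ => hC t y)
    · exact (((hcont.sub continuous_const).norm).intervalIntegrable y (y + x)).def'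
    · exact (((continuous_const.mul
        ((continuous_id.sub continuous_const).abs))).intervalIntegrable y (y + x)).def'
  refine hmono.trans ?_
  have hval : (∫ t in Set.uIoc y (y + x), |t - y|) = x ^ 2 / 2 := by
    have h := integral_pow_abs_sub_uIoc (a := y) (b := y + x) (n := 1)
    simp only [pow_one] at h
    rw [h, add_sub_cancel_left, sq_abs]
    norm_num
  rw [integral_const_mul, hval]
  nlinarith [sq_nonneg x]

/-- Lyapunov-type inequality: `E X² · E|X| ≤ E|X|³` on a probability space. -/
lemma moment_mul_aux {Ω : Type*} [MeasurableSpace Ω] {μ : Measure Ω} [IsProbabilityMeasure μ]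
    (X : Ω → ℝ) (hXm : Measurable X) (hX3 : Integrable (fun ω => |X ω| ^ 3) μ) :
    (∫ ω, (X ω) ^ 2 ∂μ) * ∫ ω, |X ω| ∂μ ≤ ∫ ω, |X ω| ^ 3 ∂μ := by
  set A := ∫ ω, |X ω| ^ 3 ∂μ with hA
  have hA0 : 0 ≤ A := integral_nonneg fun ω => by positivity
  have habs3 : (fun ω : Ω => ‖X ω‖ ^ (3 : ℝ)) = fun ω => |X ω| ^ 3 := by
    funext ω
    rw [Real.norm_eq_abs, show (3 : ℝ) = ((3 : ℕ) : ℝ) by norm_num, Real.rpow_natCast]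
  have hM3 : MemLp X (ENNReal.ofReal 3) μ := by
    have h0 : (ENNReal.ofReal 3) ≠ 0 := by simp [ENNReal.ofReal_eq_zero]
    have ht : (ENNReal.ofReal 3) ≠ ⊤ := ENNReal.ofReal_ne_top
    refine (memLp_norm_rpow_iff hXm.aestronglyMeasurable h0 ht).mp ?_
    rw [ENNReal.div_self h0 ht]
    rw [ENNReal.toReal_ofReal (by norm_num : (0:ℝ) ≤ 3)]
    rw [memLp_one_iff_integrable]
    exact hX3.congr (by rw [habs3])
  have hsq : (fun ω : Ω => ‖X ω ^ 2‖ ^ ((3 : ℝ)/2)) = fun ω => |X ω| ^ 3 := by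
    funext ω
    rw [Real.norm_eq_abs, abs_pow, show |X ω| ^ 2 = |X ω| ^ ((2:ℕ):ℝ) from
      (Real.rpow_natCast _ 2).symm, ← Real.rpow_mul (abs_nonneg _)]
    rw [show ((2:ℕ):ℝ) * ((3:ℝ)/2) = ((3:ℕ):ℝ) by norm_num, Real.rpow_natCast]
  have hM32 : MemLp (fun ω => X ω ^ 2) (ENNReal.ofReal (3/2)) μ := by
    have h0 : (ENNReal.ofReal (3/2)) ≠ 0 := by simp [ENNReal.ofReal_eq_zero]
    have ht : (ENNReal.ofReal (3/2)) ≠ ⊤ := ENNReal.ofReal_ne_top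
    refine (memLp_norm_rpow_iff (hXm.pow_const 2).aestronglyMeasurable h0 ht).mp ?_
    rw [ENNReal.div_self h0 ht]
    rw [ENNReal.toReal_ofReal (by norm_num : (0:ℝ) ≤ 3/2)]
    rw [memLp_one_iff_integrable]
    exact hX3.congr (by rw [hsq])
  have hpq : Real.HolderConjugate 3 (3/2) := ⟨by norm_num, by norm_num, by norm_num⟩
  have hpt3 : ∀ r : ℝ, ‖r‖ ^ (3:ℝ) = |r| ^ 3 := fun r => by
    rw [Real.norm_eq_abs, ← Real.rpow_natCast |r| 3]; norm_num
  have hpt3' : ∀ r : ℝ, |r| ^ (3:ℝ) = |r| ^ 3 := fun r => by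
    rw [← Real.rpow_natCast |r| 3]; norm_num
  have hn2 : ∀ r : ℝ, ‖r ^ 2‖ = r ^ 2 := fun r => by
    rw [Real.norm_eq_abs, abs_of_nonneg (sq_nonneg r)]
  have hsq' : ∀ r : ℝ, ‖r ^ 2‖ ^ ((3:ℝ)/2) = |r| ^ 3 := fun r => by
    rw [hn2, ← sq_abs r, ← Real.rpow_natCast |r| 2, ← Real.rpow_mul (abs_nonneg r),
      show ((2:ℕ):ℝ) * ((3:ℝ)/2) = ((3:ℕ):ℝ) by norm_num, Real.rpow_natCast]
  have hsq2 : ∀ r : ℝ, (r ^ 2) ^ ((3:ℝ)/2) = |r| ^ 3 := fun r => by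
    rw [← hn2, hsq']
  have h1 : (∫ ω, |X ω| ∂μ) ≤ A ^ ((1:ℝ)/3) := by
    have h := integral_mul_norm_le_Lp_mul_Lq hpq hM3 (memLp_const (1:ℝ))
    simp only [norm_one, Real.one_rpow, integral_const, measure_univ, probReal_univ, ENNReal.toReal_one,
      one_smul, mul_one, hpt3, hpt3', Real.norm_eq_abs] at h
    exact h
  have h2 : (∫ ω, (X ω) ^ 2 ∂μ) ≤ A ^ ((1:ℝ)/(3/2)) := by
    have h := integral_mul_norm_le_Lp_mul_Lq hpq.symm hM32 (memLp_const (1:ℝ))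
    simp only [norm_one, Real.one_rpow, integral_const, measure_univ, probReal_univ, ENNReal.toReal_one,
      one_smul, mul_one, hsq', hsq2, hn2] at h
    exact h
  have habs0 : 0 ≤ ∫ ω, |X ω| ∂μ := integral_nonneg fun ω => abs_nonneg _
  calc (∫ ω, (X ω) ^ 2 ∂μ) * ∫ ω, |X ω| ∂μ ≤ A ^ ((1:ℝ)/(3/2)) * A ^ ((1:ℝ)/3) :=
    mul_le_mul h2 h1 habs0 (Real.rpow_nonneg hA0 _)
  _ = A := by
      rw [← Real.rpow_add_of_nonneg hA0 (by norm_num) (by norm_num)]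
      norm_num

/-- Per-step Stein–Taylor estimate (display (13) in Röllin): if `E X = 0`, `E X² = σ²`,
`E|X|³ < ∞`, `T` is independent of `X`, and `f'` is Lipschitz with constant `C`, then
`|E[σ² f'(s + X + T) − X f(s + X + T)]| ≤ (3/2) C E|X|³`. -/
theorem stein_taylor_step_estimate
    {Ω : Type*} [MeasurableSpace Ω] {μ : Measure Ω} [IsProbabilityMeasure μ]
    (X T : Ω → ℝ) (hXm : Measurable X) (hTm : Measurable T)
    (hX1 : Integrable X μ) (hXmean : (∫ ω, X ω ∂μ) = 0)
    (σ2 : ℝ) (hX2 : Integrable (fun ω => (X ω) ^ 2) μ)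
    (hXvar : (∫ ω, (X ω) ^ 2 ∂μ) = σ2)
    (hX3 : Integrable (fun ω => |X ω| ^ 3) μ)
    (hT : Integrable T μ)
    (hindep : IndepFun X T μ)
    (s : ℝ) (f : ℝ → ℝ) (hf : Differentiable ℝ f)
    (C : ℝ) (hC : ∀ x y : ℝ, |deriv f x - deriv f y| ≤ C * |x - y|)
    -- all expectations are assumed to exist:
    (hintf' : Integrable (fun ω => deriv f (s + X ω + T ω)) μ)
    (hintf : Integrable (fun ω => X ω * f (s + X ω + T ω)) μ) :
    |∫ ω, (σ2 * deriv f (s + X ω + T ω) - X ω * f (s + X ω + T ω)) ∂μ|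
      ≤ (3 / 2) * C * ∫ ω, |X ω| ^ 3 ∂μ := by
  have hC0 : 0 ≤ C := le_trans (abs_nonneg (deriv f 1 - deriv f 0)) (by simpa using hC 1 0)
  have hσ0 : 0 ≤ σ2 := hXvar ▸ integral_nonneg fun ω => sq_nonneg _
  have hA0 : 0 ≤ ∫ ω, |X ω| ^ 3 ∂μ := integral_nonneg fun ω => by positivity
  have mf : Measurable f := hf.continuous.measurable
  have mf' : Measurable (deriv f) := measurable_deriv f
  have mY : Measurable fun ω => s + T ω := measurable_const.add hTm
  have mW : Measurable fun ω => s + X ω + T ω := (measurable_const.add hXm).add hTm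
  have mfY : Measurable fun ω => f (s + T ω) := mf.comp mY
  have mf'Y : Measurable fun ω => deriv f (s + T ω) := mf'.comp mY
  set R : Ω → ℝ := fun ω => f (s + X ω + T ω) - f (s + T ω) - X ω * deriv f (s + T ω)
    with hRdef
  have mR : Measurable R := ((mf.comp mW).sub mfY).sub (hXm.mul mf'Y)
  have hRbound : ∀ ω, |R ω| ≤ C / 2 * (X ω) ^ 2 := by
    intro ω
    have h := taylor_aux f hf C hC0 hC (s + T ω) (X ω)
    have he : s + X ω + T ω = (s + T ω) + X ω := by ring
    rw [hRdef]
    simpa [he] using h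
  have hXR : ∀ ω, |X ω * R ω| ≤ C / 2 * |X ω| ^ 3 := by
    intro ω
    rw [abs_mul]
    calc |X ω| * |R ω| ≤ |X ω| * (C / 2 * (X ω) ^ 2) :=
      mul_le_mul_of_nonneg_left (hRbound ω) (abs_nonneg _)
    _ = C / 2 * |X ω| ^ 3 := by rw [← sq_abs]; ring
  -- integrability of deriv f (s + T ·)
  have i1 : Integrable (fun ω => deriv f (s + T ω)) μ := by
    refine Integrable.mono ((integrable_const (|deriv f 0| + C * |s|)).add
      (hT.abs.const_mul C)) mf'Y.aestronglyMeasurable (ae_of_all _ fun ω => ?_)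
    have hnn : (0:ℝ) ≤ |deriv f 0| + C * |s| + C * |T ω| :=
      add_nonneg (add_nonneg (abs_nonneg _) (mul_nonneg hC0 (abs_nonneg _)))
        (mul_nonneg hC0 (abs_nonneg _))
    simp only [Real.norm_eq_abs, Pi.add_apply]
    rw [abs_of_nonneg hnn]
    have h := hC (s + T ω) 0
    have h2 : |deriv f (s + T ω)| ≤ |deriv f (s + T ω) - deriv f 0| + |deriv f 0| := by
      calc |deriv f (s + T ω)| = |(deriv f (s + T ω) - deriv f 0) + deriv f 0| := by
            congr 1; ring
      _ ≤ |deriv f (s + T ω) - deriv f 0| + |deriv f 0| := abs_add_le _ _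
    have h3 : |s + T ω - 0| ≤ |s| + |T ω| := by
      rw [sub_zero]; exact abs_add_le _ _
    nlinarith [mul_le_mul_of_nonneg_left h3 hC0]
  -- independence facts
  have indXfY : IndepFun X (fun ω => f (s + T ω)) μ :=
    hindep.comp measurable_id (mf.comp (measurable_const.add measurable_id))
  have indX2f'Y : IndepFun (fun ω => X ω ^ 2) (fun ω => deriv f (s + T ω)) μ :=
    hindep.comp (measurable_id.pow_const 2) (mf'.comp (measurable_const.add measurable_id))
  have e1 : (∫ ω, X ω * f (s + T ω) ∂μ) = 0 := by
    rw [indXfY.integral_fun_mul_eq_mul_integral hXm.aestronglyMeasurable mfY.aestronglyMeasurable, hXmean,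
      zero_mul]
  have e2 : (∫ ω, (X ω) ^ 2 * deriv f (s + T ω) ∂μ) = σ2 * ∫ ω, deriv f (s + T ω) ∂μ := by
    rw [indX2f'Y.integral_fun_mul_eq_mul_integral (hXm.pow_const 2).aestronglyMeasurable
      mf'Y.aestronglyMeasurable, hXvar]
  have i2 : Integrable (fun ω => (X ω) ^ 2 * deriv f (s + T ω)) μ :=
    indX2f'Y.integrable_mul hX2 i1
  have i3 : Integrable (fun ω => X ω * R ω) μ := by
    refine Integrable.mono (hX3.const_mul (C / 2)) (hXm.mul mR).aestronglyMeasurable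
      (ae_of_all _ fun ω => ?_)
    have hnn : (0:ℝ) ≤ C / 2 * |X ω| ^ 3 := mul_nonneg (by linarith) (by positivity)
    simp only [Real.norm_eq_abs]
    rw [abs_of_nonneg hnn]
    exact hXR ω
  have i4 : Integrable (fun ω => X ω * f (s + T ω)) μ := by
    have heq : (fun ω => X ω * f (s + T ω))
        = fun ω => X ω * f (s + X ω + T ω) - (X ω) ^ 2 * deriv f (s + T ω) - X ω * R ω := by
      funext ω; rw [hRdef]; ring
    rw [heq]; exact (hintf.sub i2).sub i3
  have i5 : Integrable (fun ω =>
      σ2 * deriv f (s + X ω + T ω) - σ2 * deriv f (s + T ω) - X ω * R ω) μ :=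
    ((hintf'.const_mul σ2).sub (i1.const_mul σ2)).sub i3
  have i6 : Integrable (fun ω =>
      σ2 * deriv f (s + T ω) - X ω * f (s + T ω) - (X ω) ^ 2 * deriv f (s + T ω)) μ :=
    ((i1.const_mul σ2).sub i4).sub i2
  have split : (∫ ω, (σ2 * deriv f (s + X ω + T ω) - X ω * f (s + X ω + T ω)) ∂μ)
      = (∫ ω, (σ2 * deriv f (s + X ω + T ω) - σ2 * deriv f (s + T ω) - X ω * R ω) ∂μ)
        + ∫ ω, (σ2 * deriv f (s + T ω) - X ω * f (s + T ω)
            - (X ω) ^ 2 * deriv f (s + T ω)) ∂μ := by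
    rw [← integral_add i5 i6]
    refine integral_congr_ae (ae_of_all _ fun ω => ?_)
    rw [hRdef]; ring
  have j1 : Integrable (fun ω => σ2 * deriv f (s + T ω) - X ω * f (s + T ω)) μ :=
    (i1.const_mul σ2).sub i4
  have zero2 : (∫ ω, (σ2 * deriv f (s + T ω) - X ω * f (s + T ω)
      - (X ω) ^ 2 * deriv f (s + T ω)) ∂μ) = 0 := by
    rw [integral_sub j1 i2, integral_sub (i1.const_mul σ2) i4,
      integral_const_mul, e1, e2]
    ring
  rw [split, zero2, add_zero]
  have keybound : ∀ ω, ‖σ2 * deriv f (s + X ω + T ω) - σ2 * deriv f (s + T ω) - X ω * R ω‖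
      ≤ σ2 * C * |X ω| + C / 2 * |X ω| ^ 3 := by
    intro ω
    rw [Real.norm_eq_abs]
    have h1 : |σ2 * deriv f (s + X ω + T ω) - σ2 * deriv f (s + T ω)| ≤ σ2 * C * |X ω| := by
      rw [← mul_sub, abs_mul, abs_of_nonneg hσ0, mul_assoc]
      refine mul_le_mul_of_nonneg_left ?_ hσ0
      have h := hC (s + X ω + T ω) (s + T ω)
      have he : s + X ω + T ω - (s + T ω) = X ω := by ring
      rwa [he] at h
    calc |σ2 * deriv f (s + X ω + T ω) - σ2 * deriv f (s + T ω) - X ω * R ω|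
        ≤ |σ2 * deriv f (s + X ω + T ω) - σ2 * deriv f (s + T ω)| + |X ω * R ω| :=
      abs_sub _ _
    _ ≤ σ2 * C * |X ω| + C / 2 * |X ω| ^ 3 := add_le_add h1 (hXR ω)
  have hmom : σ2 * (∫ ω, |X ω| ∂μ) ≤ ∫ ω, |X ω| ^ 3 ∂μ :=
    hXvar ▸ moment_mul_aux X hXm hX3
  calc |∫ ω, (σ2 * deriv f (s + X ω + T ω) - σ2 * deriv f (s + T ω) - X ω * R ω) ∂μ|
      = ‖∫ ω, (σ2 * deriv f (s + X ω + T ω) - σ2 * deriv f (s + T ω) - X ω * R ω) ∂μ‖ :=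
    (Real.norm_eq_abs _).symm
  _ ≤ ∫ ω, ‖σ2 * deriv f (s + X ω + T ω) - σ2 * deriv f (s + T ω) - X ω * R ω‖ ∂μ :=
    norm_integral_le_integral_norm _
  _ ≤ ∫ ω, (σ2 * C * |X ω| + C / 2 * |X ω| ^ 3) ∂μ :=
    integral_mono i5.norm ((hX1.abs.const_mul (σ2 * C)).add (hX3.const_mul (C / 2)))
      keybound
  _ = σ2 * C * (∫ ω, |X ω| ∂μ) + C / 2 * ∫ ω, |X ω| ^ 3 ∂μ := by
    rw [integral_add (hX1.abs.const_mul (σ2 * C)) (hX3.const_mul (C / 2)),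
      integral_const_mul, integral_const_mul]
  _ ≤ (3 / 2) * C * ∫ ω, |X ω| ^ 3 ∂μ := by
    nlinarith [mul_le_mul_of_nonneg_left hmom hC0]
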